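/- For every fixed C ≥ 2, every arithmetic progression contained in the sumset S₁ + ⋯ + Sₙ of n C-log-sparse sets has length at most n^{(1+O(log log n / log n))·n}; more precisely, there is a constant K = K(C) such that the length is at most n^{n(1 + log log n / log n + K/log n)} for all n ≥ 3. -/

import Mathlib

/-- A set of positive integers is `C`-log-sparse if every dyadic interval `[x, 2x)`
contains at most `C` of its elements. -/
def LogSparse (C : ℕ) (T : Set ℕ) : Prop :=
  (∀ t ∈ T, 0 < t) ∧ ∀ x : ℕ, 0 < x → (T ∩ Set.Ico x (2 * x)).ncard ≤ C

/-- The sumset `S 0 + S 1 + ⋯ + S (n-1)`. -/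
def sumSet {n : ℕ} (S : Fin n → Set ℕ) : Set ℕ :=
  {s | ∃ x : Fin n → ℕ, (∀ i, x i ∈ S i) ∧ ∑ i, x i = s}

/-- The arithmetic progression `{a, a+d, …, a+(k-1)d}` of length `k`. -/
def AP (a d k : ℕ) : Set ℕ := {m | ∃ i < k, m = a + i * d}

namespace ApUpper

open Finset

/-- Union-cover counting. -/
lemma ncard_le_sum_cover {α ι : Type*} (B : Finset ι) (F : ι → Set α) (s : Set α)
    (hcov : s ⊆ ⋃ b ∈ B, F b) (hfin : ∀ b ∈ B, (F b).Finite) :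
    s.ncard ≤ ∑ b ∈ B, (F b).ncard := by
  classical
  induction B using Finset.induction generalizing s with
  | empty =>
      simp only [Finset.notMem_empty, Set.iUnion_of_empty, Set.iUnion_empty,
        Set.subset_empty_iff] at hcov
      simp [hcov]
  | @insert a B ha ih =>
      have h1 : s ⊆ F a ∪ ⋃ b ∈ B, F b := by
        intro x hx
        rcases hcov hx with hx'
        simp only [Set.mem_iUnion, Finset.mem_insert] at hx'
        obtain ⟨b, (rfl | hb), hxb⟩ := hx'
        · exact Or.inl hxb
        · exact Or.inr (Set.mem_biUnion hb hxb)
      have hs : s = (s ∩ F a) ∪ (s ∩ ⋃ b ∈ B, F b) := by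
        rw [← Set.inter_union_distrib_left]
        exact (Set.inter_eq_left.2 h1).symm
      have hBfin : (⋃ b ∈ B, F b).Finite :=
        Set.Finite.biUnion B.finite_toSet (fun b hb => hfin b (Finset.mem_insert_of_mem hb))
      calc s.ncard = ((s ∩ F a) ∪ (s ∩ ⋃ b ∈ B, F b)).ncard := by rw [← hs]
    _ ≤ (s ∩ F a).ncard + (s ∩ ⋃ b ∈ B, F b).ncard := Set.ncard_union_le _ _
    _ ≤ (F a).ncard + ∑ b ∈ B, (F b).ncard := by
        have e1 : (s ∩ F a).ncard ≤ (F a).ncard :=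
          Set.ncard_le_ncard Set.inter_subset_right (hfin a (Finset.mem_insert_self a B))
        have e2 : (s ∩ ⋃ b ∈ B, F b).ncard ≤ ∑ b ∈ B, (F b).ncard :=
          ih _ Set.inter_subset_right (fun b hb => hfin b (Finset.mem_insert_of_mem hb))
        omega
    _ = ∑ b ∈ insert a B, (F b).ncard := by rw [Finset.sum_insert ha]

section Sparse

variable {C : ℕ} {S : Set ℕ}

lemma sparse_Ico_pow (hS : LogSparse C S) (x : ℕ) (hx : 0 < x) (m : ℕ) :
    (S ∩ Set.Ico x (x * 2 ^ m)).ncard ≤ C * m := by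
  induction m with
  | zero => simp
  | succ m ih =>
      have h1 : x ≤ x * 2 ^ m := Nat.le_mul_of_pos_right x (Nat.pow_pos (n := m) (by norm_num : 0 < 2))
      have h2 : x * 2 ^ m ≤ x * 2 ^ (m + 1) := by
        apply Nat.mul_le_mul_left
        exact Nat.pow_le_pow_right (by norm_num) (Nat.le_succ m)
      have hsplit : Set.Ico x (x * 2 ^ (m + 1)) =
          Set.Ico x (x * 2 ^ m) ∪ Set.Ico (x * 2 ^ m) (x * 2 ^ (m + 1)) :=
        (Set.Ico_union_Ico_eq_Ico h1 h2).symm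
      have h3 : (S ∩ Set.Ico (x * 2 ^ m) (x * 2 ^ (m + 1))).ncard ≤ C := by
        have : x * 2 ^ (m + 1) = 2 * (x * 2 ^ m) := by ring
        rw [this]
        exact hS.2 (x * 2 ^ m) (Nat.mul_pos hx (Nat.pow_pos (n := m) (by norm_num : 0 < 2)))
      calc (S ∩ Set.Ico x (x * 2 ^ (m + 1))).ncard
          = ((S ∩ Set.Ico x (x * 2 ^ m)) ∪ (S ∩ Set.Ico (x * 2 ^ m) (x * 2 ^ (m + 1)))).ncard := by
            rw [hsplit, Set.inter_union_distrib_left]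
        _ ≤ (S ∩ Set.Ico x (x * 2 ^ m)).ncard + (S ∩ Set.Ico (x * 2 ^ m) (x * 2 ^ (m + 1))).ncard :=
            Set.ncard_union_le _ _
        _ ≤ C * m + C := by gcongr
        _ = C * (m + 1) := by ring

lemma sparse_window (hS : LogSparse C S) {x₁ x₂ R : ℕ} (h1 : 0 < x₁) (h2 : x₂ ≤ x₁ * R) :
    (S ∩ Set.Icc x₁ x₂).ncard ≤ C * (Nat.log 2 R + 1) := by
  have hsub : S ∩ Set.Icc x₁ x₂ ⊆ S ∩ Set.Ico x₁ (x₁ * 2 ^ (Nat.log 2 R + 1)) := by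
    intro z hz
    refine ⟨hz.1, hz.2.1, ?_⟩
    calc z ≤ x₁ * R := le_trans hz.2.2 h2
      _ < x₁ * 2 ^ (Nat.log 2 R + 1) := by
          have h3 := Nat.lt_pow_succ_log_self (b := 2) (by norm_num) R
          have h4 : R * x₁ < 2 ^ (Nat.log 2 R).succ * x₁ :=
            Nat.mul_lt_mul_of_lt_of_le h3 (le_refl x₁) h1
          calc x₁ * R = R * x₁ := by ring
            _ < 2 ^ (Nat.log 2 R).succ * x₁ := h4
            _ = x₁ * 2 ^ (Nat.log 2 R + 1) := by rw [Nat.succ_eq_add_one, Nat.mul_comm]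
  have hfin : (S ∩ Set.Ico x₁ (x₁ * 2 ^ (Nat.log 2 R + 1))).Finite :=
    Set.Finite.inter_of_right (Set.finite_Ico _ _) S
  exact le_trans (Set.ncard_le_ncard hsub hfin) (sparse_Ico_pow hS x₁ h1 _)

/-- Counting elements of a sparse set in a "scaled window" `A ≤ ν s ∧ s ≤ T A`. -/
lemma sparse_scaled (hS : LogSparse C S) {ν A T : ℕ} (hν : 0 < ν) (hA : 0 < A) :
    {s : ℕ | s ∈ S ∧ A ≤ ν * s ∧ s ≤ T * A}.ncard ≤ C * (Nat.log 2 (2 * T * ν) + 1) := by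
  set x₁ := max (A / ν) 1 with hx₁
  have h1 : 0 < x₁ := lt_of_lt_of_le Nat.one_pos (le_max_right _ _)
  have hsub : {s : ℕ | s ∈ S ∧ A ≤ ν * s ∧ s ≤ T * A} ⊆ S ∩ Set.Icc x₁ (T * A) := by
    rintro s ⟨hsS, hs1, hs2⟩
    refine ⟨hsS, ?_, hs2⟩
    have hdiv : A / ν ≤ s := by
      have := Nat.div_le_div_right (c := ν) hs1
      rwa [Nat.mul_div_cancel_left s hν] at this
    have hpos : 1 ≤ s := by
      rcases Nat.eq_zero_or_pos s with rfl | h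
      · simp at hs1; omega
      · exact h
    exact max_le hdiv hpos
  have h2 : T * A ≤ x₁ * (2 * T * ν) := by
    rcases le_or_gt ν A with hcase | hcase
    · have hd1 : 1 ≤ A / ν := (Nat.one_le_div_iff hν).2 hcase
      have hx : x₁ = A / ν := max_eq_left hd1
      have hA2 : A ≤ 2 * (ν * (A / ν)) := by
        have hmod := Nat.div_add_mod A ν
        have hlt : A % ν < ν := Nat.mod_lt _ hν
        have : ν ≤ ν * (A / ν) := Nat.le_mul_of_pos_right ν hd1
        omega
      rw [hx]
      calc T * A ≤ T * (2 * (ν * (A / ν))) := Nat.mul_le_mul_left _ hA2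
        _ = (A / ν) * (2 * T * ν) := by ring
    · calc T * A ≤ T * ν := Nat.mul_le_mul_left _ (le_of_lt hcase)
        _ ≤ 1 * (2 * T * ν) := by nlinarith
        _ ≤ x₁ * (2 * T * ν) := Nat.mul_le_mul_right _ (le_max_right _ _)
  exact le_trans (Set.ncard_le_ncard hsub
    (Set.Finite.inter_of_right (Set.finite_Icc _ _) S)) (sparse_window hS h1 h2)

end Sparse

section Tuples

variable {n : ℕ} (S : Fin n → Set ℕ)

/-- Tuples supported on `J`, coordinatewise in `S i`, with total sum in `V`. -/
def Tup (J : Finset (Fin n)) (V : Set ℕ) : Set (Fin n → ℕ) :=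
  {y | (∀ i ∈ J, y i ∈ S i) ∧ (∀ i ∉ J, y i = 0) ∧ (∑ i, y i) ∈ V}

lemma coord_le_sum (y : Fin n → ℕ) (i : Fin n) : y i ≤ ∑ j, y j :=
  Finset.single_le_sum (fun j _ => Nat.zero_le (y j)) (Finset.mem_univ i)

lemma tup_finite {J : Finset (Fin n)} {V : Set ℕ} {B : ℕ} (hV : ∀ z ∈ V, z ≤ B) :
    (Tup S J V).Finite := by
  have hpi : (Set.univ.pi (fun _ : Fin n => Set.Iic B)).Finite :=
    Set.Finite.pi (fun _ => Set.finite_Iic B)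
  apply hpi.subset
  intro y hy
  intro i _
  exact le_trans (coord_le_sum y i) (hV _ hy.2.2)

lemma tup_empty_ncard (V : Set ℕ) : (Tup S ∅ V).ncard ≤ 1 := by
  have : Tup S ∅ V ⊆ {fun _ => 0} := by
    intro y hy
    have := hy.2.1
    simp only [Set.mem_singleton_iff]
    funext i
    exact this i (Finset.notMem_empty i)
  exact le_trans (Set.ncard_le_ncard this (Set.finite_singleton _)) (le_of_eq (Set.ncard_singleton _))

lemma sum_eq_sum_support {J : Finset (Fin n)} {y : Fin n → ℕ} (h : ∀ i ∉ J, y i = 0) :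
    ∑ i ∈ J, y i = ∑ i, y i :=
  Finset.sum_subset (Finset.subset_univ J) (fun i _ hi => h i hi)

end Tuples

section Count

variable {n C : ℕ} {S : Fin n → Set ℕ}

/-- Per-coordinate count for windows of ratio `4 n²`. -/
def thetaH (n C : ℕ) : ℕ := C * (Nat.log 2 (4 * n ^ 2) + 1)

lemma sparse_D_count (hS : ∀ i, LogSparse C (S i)) (hn : 0 < n) (i : Fin n) {A : ℕ} (hA : 0 < A) :
    {s : ℕ | s ∈ S i ∧ A ≤ n ^ 2 * s ∧ s ≤ 2 * A}.ncard ≤ thetaH n C := by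
  have := sparse_scaled (hS i) (ν := n ^ 2) (A := A) (T := 2) (by positivity) hA
  have h4 : 2 * 2 * n ^ 2 = 4 * n ^ 2 := by ring
  rw [h4] at this
  exact this

lemma D_finite (i : Fin n) {A : ℕ} :
    {s : ℕ | s ∈ S i ∧ A ≤ n ^ 2 * s ∧ s ≤ 2 * A}.Finite :=
  Set.Finite.subset (Set.finite_Icc 0 (2 * A)) (fun s hs => ⟨Nat.zero_le _, hs.2.2⟩)

/-- Counting tuples with an exactly fixed sum. -/
lemma fix_count (hS : ∀ i, LogSparse C (S i)) (hn : 0 < n) :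
    ∀ (j : ℕ) (J : Finset (Fin n)) (q : ℕ), J.card ≤ j →
      (Tup S J {q}).ncard ≤ (n * thetaH n C) ^ J.card := by
  classical
  intro j
  induction j with
  | zero =>
      intro J q hJ
      rw [Finset.card_eq_zero.mp (Nat.le_zero.mp hJ)]
      simpa using tup_empty_ncard S {q}
  | succ j ih =>
      intro J q hJ
      rcases J.eq_empty_or_nonempty with rfl | hJne
      · simpa using tup_empty_ncard S {q}
      rcases Nat.eq_zero_or_pos q with rfl | hq
      · -- empty set: coordinates are positive
        have : Tup S J {0} = ∅ := by
          ext y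
          simp only [Set.mem_empty_iff_false, iff_false]
          intro hy
          obtain ⟨i, hi⟩ := hJne
          have h1 : 0 < y i := (hS i).1 _ (hy.1 i hi)
          have h2 : y i ≤ ∑ l, y l := coord_le_sum y i
          have h3 : (∑ l, y l) = 0 := hy.2.2
          omega
        simp [this]
      -- main case
      set Φ := n * thetaH n C with hΦ
      have hcard : 1 ≤ J.card := Finset.card_pos.mpr hJne
      set D : Fin n → Set ℕ := fun i => {s : ℕ | s ∈ S i ∧ q ≤ n ^ 2 * s ∧ s ≤ 2 * q} with hD
      have hDfin : ∀ i, (D i).Finite := fun i => D_finite i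
      set E : Fin n → Finset ℕ := fun i => (hDfin i).toFinset with hE
      set B : Finset ((_ : Fin n) × ℕ) := J.sigma (fun i => E i) with hB
      set G : ((_ : Fin n) × ℕ) → Set (Fin n → ℕ) :=
        fun p => {y ∈ Tup S J {q} | y p.1 = p.2} with hG
      -- cover
      have hcov : Tup S J {q} ⊆ ⋃ b ∈ B, G b := by
        intro y hy
        obtain ⟨i₀, hi₀J, hmax⟩ := Finset.exists_max_image J y hJne
        have hsum : ∑ i ∈ J, y i = q := by
          rw [sum_eq_sum_support hy.2.1]; exact hy.2.2
        have hle : q ≤ J.card * y i₀ := by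
          have := Finset.sum_le_card_nsmul J y (y i₀) (fun x hx => hmax x hx)
          rw [hsum] at this
          simpa [smul_eq_mul] using this
        have hbig : q ≤ n ^ 2 * y i₀ := by
          have h1 : J.card ≤ n ^ 2 := le_trans (le_trans (Finset.card_le_univ J)
            (le_of_eq (Finset.card_univ.trans (Fintype.card_fin n)))) (Nat.le_self_pow (by norm_num) n)
          calc q ≤ J.card * y i₀ := hle
            _ ≤ n ^ 2 * y i₀ := Nat.mul_le_mul_right _ h1
        have hyle : y i₀ ≤ 2 * q := by
          have := coord_le_sum y i₀
          have h3 : (∑ l, y l) = q := hy.2.2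
          omega
        have hmem : (⟨i₀, y i₀⟩ : (_ : Fin n) × ℕ) ∈ B := by
          rw [hB]
          refine Finset.mem_sigma.mpr ⟨hi₀J, ?_⟩
          rw [hE]
          simp only [Set.Finite.mem_toFinset]
          exact ⟨hy.1 i₀ hi₀J, hbig, hyle⟩
        exact Set.mem_biUnion hmem ⟨hy, rfl⟩
      -- fibers
      have htupfin : ∀ (J' : Finset (Fin n)) (q' : ℕ), (Tup S J' {q'}).Finite :=
        fun J' q' => tup_finite S (B := q') (by intro z hz; rw [Set.mem_singleton_iff] at hz; omega)
      have hfibG : ∀ b ∈ B, (G b).ncard ≤ Φ ^ (J.card - 1) := by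
        rintro ⟨i, s⟩ hb
        obtain ⟨hiJ, hsE⟩ := Finset.mem_sigma.mp hb
        rcases Set.eq_empty_or_nonempty (G ⟨i, s⟩) with hGe | ⟨y₀, hy₀⟩
        · simp [hGe]
        have hy₀T : y₀ ∈ Tup S J {q} := hy₀.1
        have hy₀i : y₀ i = s := hy₀.2
        have hsq : s ≤ q := by
          have h1 := coord_le_sum y₀ i
          have h2 : (∑ l, y₀ l) = q := hy₀T.2.2
          omega
        have hmapsto : ∀ y ∈ G ⟨i, s⟩, Function.update y i 0 ∈ Tup S (J.erase i) {q - s} := by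
          rintro y ⟨hyT, hyi⟩
          have hyi2 : y i = s := hyi
          refine ⟨?_, ?_, ?_⟩
          · intro i' hi'
            obtain ⟨hne, hi'J⟩ := Finset.mem_erase.mp hi'
            rw [Function.update_of_ne hne]
            exact hyT.1 i' hi'J
          · intro i' hi'
            rcases eq_or_ne i' i with rfl | hne
            · simp
            · rw [Function.update_of_ne hne]
              exact hyT.2.1 i' (fun h => hi' (Finset.mem_erase.mpr ⟨hne, h⟩))
          · have hsum : ∑ x, Function.update y i 0 x = 0 + ∑ x ∈ Finset.univ.erase i, y x := by
              rw [Finset.sum_update_of_mem (Finset.mem_univ i)]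
              rw [Finset.erase_eq]
            have hadd : y i + ∑ x ∈ Finset.univ.erase i, y x = ∑ x, y x :=
              Finset.add_sum_erase Finset.univ y (Finset.mem_univ i)
            have hq : (∑ x, y x) = q := hyT.2.2
            have : (∑ x, Function.update y i 0 x) = q - s := by
              rw [hsum]; omega
            simp [this]
        have hinj : Set.InjOn (fun y => Function.update y i 0) (G ⟨i, s⟩) := by
          rintro y₁ ⟨hy₁T, hy₁i⟩ y₂ ⟨hy₂T, hy₂i⟩ heq
          funext x
          rcases eq_or_ne x i with rfl | hne
          · rw [hy₁i, hy₂i]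
          · have h5 := congrFun heq x
            simp only [Function.update_of_ne hne] at h5
            exact h5
        have hle := Set.ncard_le_ncard_of_injOn _ hmapsto hinj (htupfin _ _)
        refine le_trans hle ?_
        have hcard1 : (J.erase i).card = J.card - 1 := Finset.card_erase_of_mem hiJ
        have := ih (J.erase i) (q - s) (by omega)
        rwa [hcard1] at this
      have hGfin : ∀ b ∈ B, (G b).Finite := by
        intro b _
        exact Set.Finite.subset (htupfin J q) (fun y hy => hy.1)
      have hstep := ncard_le_sum_cover B G _ hcov hGfin
      have hsum2 : ∑ b ∈ B, (G b).ncard ≤ ∑ _b ∈ B, Φ ^ (J.card - 1) :=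
        Finset.sum_le_sum hfibG
      have hBcard : B.card ≤ n * thetaH n C := by
        rw [hB, Finset.card_sigma]
        have h1 : ∀ i ∈ J, (E i).card ≤ thetaH n C := by
          intro i _
          rw [hE]
          rw [← Set.ncard_eq_toFinset_card _ (hDfin i)]
          exact sparse_D_count hS hn i hq
        calc ∑ i ∈ J, (E i).card ≤ ∑ _i ∈ J, thetaH n C := Finset.sum_le_sum h1
          _ = J.card * thetaH n C := by rw [Finset.sum_const, smul_eq_mul]
          _ ≤ n * thetaH n C := by
              have : J.card ≤ n := le_trans (Finset.card_le_univ J)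
                (le_of_eq (Finset.card_univ.trans (Fintype.card_fin n)))
              exact Nat.mul_le_mul_right _ this
      calc (Tup S J {q}).ncard ≤ ∑ b ∈ B, (G b).ncard := hstep
        _ ≤ B.card * Φ ^ (J.card - 1) := by
            refine le_trans hsum2 (le_of_eq ?_)
            rw [Finset.sum_const, smul_eq_mul]
        _ ≤ Φ * Φ ^ (J.card - 1) := Nat.mul_le_mul_right _ hBcard
        _ = Φ ^ (J.card) := by
            rw [← pow_succ']
            congr 1
            omega

section Steps

variable {n : ℕ}

/-- One level of the decomposition: if the current sum is still `≥ d`, remove all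
"large" coordinates. -/
def bigStep (n d : ℕ) (y : Fin n → ℕ) (T : Finset (Fin n)) : Finset (Fin n) :=
  if d ≤ ∑ i ∈ T, y i then T.filter (fun i => n ^ 2 * y i < ∑ i ∈ T, y i) else T

def smallPart (n d : ℕ) (y : Fin n → ℕ) (J : Finset (Fin n)) : Finset (Fin n) :=
  (bigStep n d y)^[n] J

lemma bigStep_subset (d : ℕ) (y : Fin n → ℕ) (T : Finset (Fin n)) : bigStep n d y T ⊆ T := by
  unfold bigStep
  split
  · exact Finset.filter_subset _ _
  · exact le_refl T

lemma iter_bigStep_subset (d : ℕ) (y : Fin n → ℕ) (J : Finset (Fin n)) :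
    ∀ m, (bigStep n d y)^[m] J ⊆ J := by
  intro m
  induction m with
  | zero => simp
  | succ m ih =>
      rw [Function.iterate_succ_apply']
      exact le_trans (bigStep_subset d y _) ih

lemma smallPart_subset (d : ℕ) (y : Fin n → ℕ) (J : Finset (Fin n)) :
    smallPart n d y J ⊆ J := iter_bigStep_subset d y J n

lemma bigStep_card_lt (hn : 0 < n) {d : ℕ} {y : Fin n → ℕ} {T : Finset (Fin n)}
    (hd : 0 < d) (hsum : d ≤ ∑ i ∈ T, y i) : (bigStep n d y T).card < T.card := by
  have hTne : T.Nonempty := by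
    rcases T.eq_empty_or_nonempty with rfl | h
    · simp at hsum; omega
    · exact h
  obtain ⟨i₀, hi₀, hmax⟩ := Finset.exists_max_image T y hTne
  have hle : ∑ i ∈ T, y i ≤ T.card * y i₀ := by
    have := Finset.sum_le_card_nsmul T y (y i₀) (fun x hx => hmax x hx)
    simpa [smul_eq_mul] using this
  have hcard : T.card ≤ n ^ 2 :=
    le_trans (le_trans (Finset.card_le_univ T)
      (le_of_eq (Finset.card_univ.trans (Fintype.card_fin n)))) (Nat.le_self_pow (by norm_num) n)
  have hbig : ∑ i ∈ T, y i ≤ n ^ 2 * y i₀ :=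
    le_trans hle (Nat.mul_le_mul_right _ hcard)
  have hnotmem : i₀ ∉ bigStep n d y T := by
    unfold bigStep
    rw [if_pos hsum]
    simp only [Finset.mem_filter, not_and, not_lt]
    intro _
    exact hbig
  exact Finset.card_lt_card (Finset.ssubset_iff_of_subset (bigStep_subset d y T) |>.2
    ⟨i₀, hi₀, hnotmem⟩)

lemma smallPart_sum (hn : 0 < n) {d : ℕ} (hd : 0 < d) (y : Fin n → ℕ) (J : Finset (Fin n)) :
    ∑ i ∈ smallPart n d y J, y i < d := by
  have key : ∀ m, (∑ i ∈ (bigStep n d y)^[m] J, y i < d) ∨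
      ((bigStep n d y)^[m] J).card + m ≤ J.card := by
    intro m
    induction m with
    | zero => right; simp
    | succ m ih =>
        rw [Function.iterate_succ_apply']
        set T := (bigStep n d y)^[m] J with hT
        rcases lt_or_ge (∑ i ∈ T, y i) d with hlt | hge
        · left
          have : bigStep n d y T = T := by
            unfold bigStep
            rw [if_neg (by omega)]
          rw [this]; exact hlt
        · rcases ih with hlt | hcard
          · omega
          · right
            have := bigStep_card_lt hn hd hge
            omega
  rcases key n with h | h
  · exact h
  · have hJ : J.card ≤ n :=
      le_trans (Finset.card_le_univ J) (le_of_eq (Finset.card_univ.trans (Fintype.card_fin n)))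
    have : ((bigStep n d y)^[n] J).card = 0 := by omega
    have he : (bigStep n d y)^[n] J = ∅ := Finset.card_eq_zero.mp this
    rw [smallPart, he]
    simpa using hd

lemma smallPart_big (hn : 0 < n) {d : ℕ} (hd : 0 < d) (y : Fin n → ℕ) (J : Finset (Fin n)) :
    ∀ i ∈ J, i ∉ smallPart n d y J → d ≤ n ^ 2 * y i := by
  have key : ∀ m, ∀ i ∈ J, i ∉ (bigStep n d y)^[m] J → d ≤ n ^ 2 * y i := by
    intro m
    induction m with
    | zero => intro i hi hni; exact absurd hi hni
    | succ m ih =>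
        intro i hi hni
        rw [Function.iterate_succ_apply'] at hni
        set T := (bigStep n d y)^[m] J with hT
        by_cases hiT : i ∈ T
        · -- i was removed at this step
          unfold bigStep at hni
          by_cases hcase : d ≤ ∑ l ∈ T, y l
          · rw [if_pos hcase] at hni
            simp only [Finset.mem_filter, not_and, not_lt] at hni
            exact le_trans hcase (hni hiT)
          · rw [if_neg hcase] at hni
            exact absurd hiT hni
        · exact ih i hi hiT
  exact fun i hi hni => key n i hi hni

end Steps

section Main

variable {n C : ℕ} {S : Fin n → Set ℕ}

def thetaL (n C K₀ : ℕ) : ℕ := C * (Nat.log 2 ((4 * K₀ + 4) * n ^ 2) + 1)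

def Theta (n C K₀ : ℕ) : ℕ := thetaL n C K₀ + 2 * n * thetaH n C

lemma main_count (hS : ∀ i, LogSparse C (S i)) (hn : 0 < n) {d K₀ : ℕ} (hd : 0 < d) :
    ∀ (j : ℕ) (J : Finset (Fin n)) (V : Set ℕ) (b : ℕ), J.card ≤ j →
      (∀ z ∈ V, b ≤ z ∧ z ≤ b + K₀ * d) →
      (∀ z ∈ V, ∀ z' ∈ V, z ≤ z' → d ∣ z' - z) →
      (Tup S J V).ncard ≤ (Theta n C K₀) ^ J.card := by
  classical
  intro j
  induction j with
  | zero =>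
      intro J V b hJ _ _
      rw [Finset.card_eq_zero.mp (Nat.le_zero.mp hJ)]
      simpa using tup_empty_ncard S V
  | succ j ih =>
      intro J V b hJ hb hdvd
      rcases J.eq_empty_or_nonempty with rfl | hJne
      · simpa using tup_empty_ncard S V
      have hcard : 1 ≤ J.card := Finset.card_pos.mpr hJne
      have hcardn : J.card ≤ n :=
        le_trans (Finset.card_le_univ J) (le_of_eq (Finset.card_univ.trans (Fintype.card_fin n)))
      have htupfin : ∀ (J' : Finset (Fin n)) (q' : ℕ), (Tup S J' {q'}).Finite :=
        fun J' q' => tup_finite S (B := q') (by intro z hz; rw [Set.mem_singleton_iff] at hz; omega)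
      have hVfin : (Tup S J V).Finite :=
        tup_finite S (B := b + K₀ * d) (fun z hz => (hb z hz).2)
      by_cases hlow : ∃ z ∈ V, z < (K₀ + 1) * d
      · -- LOW case
        obtain ⟨z₀, hz₀V, hz₀⟩ := hlow
        set Q := (2 * K₀ + 2) * d with hQdef
        have hQ : ∀ q ∈ V, q ≤ Q := by
          intro q hq
          have h1 := (hb q hq).2
          have h2 := (hb z₀ hz₀V).1
          have h3 : (K₀ + 1) * d + K₀ * d ≤ Q := by
            rw [hQdef]; nlinarith
          omega
        set D' : Fin n → Set ℕ := fun i => {s : ℕ | s ∈ S i ∧ d ≤ n ^ 2 * s ∧ s ≤ Q} with hD'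
        have hD'fin : ∀ i, (D' i).Finite := fun i =>
          Set.Finite.subset (Set.finite_Icc 0 Q) (fun s hs => ⟨Nat.zero_le _, hs.2.2⟩)
        have hD'card : ∀ i, (D' i).ncard ≤ thetaL n C K₀ := by
          intro i
          have := sparse_scaled (hS i) (ν := n ^ 2) (A := d) (T := 2 * K₀ + 2) (by positivity) hd
          have h4 : 2 * (2 * K₀ + 2) * n ^ 2 = (4 * K₀ + 4) * n ^ 2 := by ring
          rw [h4] at this
          exact this
        set E' : Fin n → Finset ℕ := fun i => (hD'fin i).toFinset with hE'
        set P : Finset (Fin n) → Finset (Fin n → ℕ) :=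
          fun Jb => Fintype.piFinset (fun i => if i ∈ J \ Jb then E' i else {0}) with hP
        set B : Finset ((_ : Finset (Fin n)) × (Fin n → ℕ)) :=
          J.powerset.sigma (fun Jb => P Jb) with hB
        set G : ((_ : Finset (Fin n)) × (Fin n → ℕ)) → Set (Fin n → ℕ) :=
          fun p => {y ∈ Tup S J V | smallPart n d y J = p.1 ∧
            (fun i => if i ∈ J \ p.1 then y i else 0) = p.2} with hG
        have hcov : Tup S J V ⊆ ⋃ p ∈ B, G p := by
          intro y hy
          set Jb := smallPart n d y J with hJb
          have hq : (∑ i, y i) ∈ V := hy.2.2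
          set g0 : Fin n → ℕ := fun i => if i ∈ J \ Jb then y i else 0 with hg0
          have hmem : (⟨Jb, g0⟩ : (_ : Finset (Fin n)) × (Fin n → ℕ)) ∈ B := by
            rw [hB]
            refine Finset.mem_sigma.mpr ⟨Finset.mem_powerset.mpr (smallPart_subset d y J), ?_⟩
            rw [hP, Fintype.mem_piFinset]
            intro i
            show (if i ∈ J \ Jb then y i else 0) ∈ (if i ∈ J \ Jb then E' i else {0})
            by_cases hi : i ∈ J \ Jb
            · simp only [if_pos hi, hE', Set.Finite.mem_toFinset]
              obtain ⟨hiJ, hiJb⟩ := Finset.mem_sdiff.mp hi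
              refine ⟨hy.1 i hiJ, smallPart_big hn hd y J i hiJ hiJb, ?_⟩
              exact le_trans (coord_le_sum y i) (hQ _ hq)
            · simp only [if_neg hi]
              simp
          exact Set.mem_biUnion hmem ⟨hy, rfl, rfl⟩
        have hfibG : ∀ p ∈ B, (G p).ncard ≤ (n * thetaH n C) ^ p.1.card := by
          rintro ⟨Jb, g⟩ hp
          obtain ⟨hJbJ, hgP⟩ := Finset.mem_sigma.mp hp
          have hJbsub : Jb ⊆ J := Finset.mem_powerset.mp hJbJ
          rcases Set.eq_empty_or_nonempty (G ⟨Jb, g⟩) with hGe | ⟨y₀, hy₀⟩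
          · simp [hGe]
          set q₀ := ∑ i ∈ Jb, y₀ i with hq₀
          have hsum_split : ∀ y ∈ G ⟨Jb, g⟩, ∑ i ∈ Jb, y i = q₀ := by
            rintro y ⟨hyT, hySP, hymask⟩
            obtain ⟨hy₀T, hy₀SP, hy₀mask⟩ := hy₀
            have hmask : ∀ i ∈ J \ Jb, y i = y₀ i := by
              intro i hi
              have h1 := congrFun hymask i
              have h2 := congrFun hy₀mask i
              simp only [if_pos hi] at h1 h2
              rw [h1, h2]
            have hsg : ∑ i ∈ J \ Jb, y i = ∑ i ∈ J \ Jb, y₀ i :=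
              Finset.sum_congr rfl hmask
            have hy_eq : ∑ i ∈ J \ Jb, y i + ∑ i ∈ Jb, y i = ∑ i, y i := by
              rw [Finset.sum_sdiff hJbsub]
              exact sum_eq_sum_support hyT.2.1
            have hy₀_eq : ∑ i ∈ J \ Jb, y₀ i + ∑ i ∈ Jb, y₀ i = ∑ i, y₀ i := by
              rw [Finset.sum_sdiff hJbsub]
              exact sum_eq_sum_support hy₀T.2.1
            have ht : ∑ i ∈ Jb, y i < d := by
              have := smallPart_sum hn hd y J
              rwa [hySP] at this
            have ht₀ : ∑ i ∈ Jb, y₀ i < d := by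
              have := smallPart_sum hn hd y₀ J
              rwa [hy₀SP] at this
            have hqV : (∑ i, y i) ∈ V := hyT.2.2
            have hq₀V : (∑ i, y₀ i) ∈ V := hy₀T.2.2
            set t := ∑ i ∈ Jb, y i
            set t₀ := ∑ i ∈ Jb, y₀ i
            rcases le_total (∑ i, y i) (∑ i, y₀ i) with hle | hle
            · have hdd := hdvd _ hqV _ hq₀V hle
              have heq : (∑ i, y₀ i) - (∑ i, y i) = t₀ - t := by omega
              rw [heq] at hdd
              rcases Nat.eq_zero_or_pos (t₀ - t) with h0 | hpos
              · omega
              · have := Nat.le_of_dvd hpos hdd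
                omega
            · have hdd := hdvd _ hq₀V _ hqV hle
              have heq : (∑ i, y i) - (∑ i, y₀ i) = t - t₀ := by omega
              rw [heq] at hdd
              rcases Nat.eq_zero_or_pos (t - t₀) with h0 | hpos
              · omega
              · have := Nat.le_of_dvd hpos hdd
                omega
          have hmapsto : ∀ y ∈ G ⟨Jb, g⟩,
              (fun i => if i ∈ Jb then y i else 0) ∈ Tup S Jb {q₀} := by
            rintro y hyG
            obtain ⟨hyT, hySP, hymask⟩ := hyG
            refine ⟨?_, ?_, ?_⟩
            · intro i hi
              simp only [if_pos hi]
              exact hyT.1 i (hJbsub hi)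
            · intro i hi
              simp only [if_neg hi]
            · have : ∑ i, (if i ∈ Jb then y i else 0) = ∑ i ∈ Jb, y i := by
                rw [Finset.sum_ite_mem, Finset.univ_inter]
              rw [this]
              exact hsum_split y ⟨hyT, hySP, hymask⟩
          have hinj : Set.InjOn (fun y => (fun i => if i ∈ Jb then y i else 0)) (G ⟨Jb, g⟩) := by
            rintro y₁ ⟨hy₁T, _, hy₁mask⟩ y₂ ⟨hy₂T, _, hy₂mask⟩ heq
            funext x
            by_cases hx : x ∈ Jb
            · have := congrFun heq x
              simpa [if_pos hx] using this
            · by_cases hxJ : x ∈ J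
              · have hxd : x ∈ J \ Jb := Finset.mem_sdiff.mpr ⟨hxJ, hx⟩
                have h1 := congrFun hy₁mask x
                have h2 := congrFun hy₂mask x
                simp only [if_pos hxd] at h1 h2
                rw [h1, h2]
              · rw [hy₁T.2.1 x hxJ, hy₂T.2.1 x hxJ]
          have hle := Set.ncard_le_ncard_of_injOn _ hmapsto hinj (htupfin _ _)
          exact le_trans hle (fix_count hS hn Jb.card Jb q₀ (le_refl _))
        have hGfin : ∀ p ∈ B, (G p).Finite := by
          intro p _
          exact Set.Finite.subset hVfin (fun y hy => hy.1)
        have hstep := ncard_le_sum_cover B G _ hcov hGfin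
        refine le_trans hstep ?_
        have hsum2 : ∑ p ∈ B, (G p).ncard ≤ ∑ p ∈ B, (n * thetaH n C) ^ p.1.card :=
          Finset.sum_le_sum hfibG
        refine le_trans hsum2 ?_
        rw [hB, Finset.sum_sigma]
        have hPcard : ∀ Jb ∈ J.powerset, (P Jb).card ≤ (thetaL n C K₀) ^ ((J \ Jb).card) := by
          intro Jb _
          rw [hP, Fintype.card_piFinset]
          have h1 : ∀ i : Fin n, (if i ∈ J \ Jb then E' i else {0}).card
              = (if i ∈ J \ Jb then (E' i).card else 1) := by
            intro i; split <;> simp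
          rw [Finset.prod_congr rfl (fun i _ => h1 i)]
          rw [Finset.prod_ite (fun i => (E' i).card) (fun _ => 1)]
          rw [Finset.prod_const_one, mul_one]
          have h2 : Finset.univ.filter (fun i => i ∈ J \ Jb) = J \ Jb := by
            ext i; simp
          rw [h2]
          apply Finset.prod_le_pow_card
          intro i _
          rw [hE', ← Set.ncard_eq_toFinset_card _ (hD'fin i)]
          exact hD'card i
        calc ∑ Jb ∈ J.powerset, ∑ _g ∈ P Jb, (n * thetaH n C) ^ Jb.card
            = ∑ Jb ∈ J.powerset, (P Jb).card * (n * thetaH n C) ^ Jb.card := by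
              refine Finset.sum_congr rfl (fun Jb _ => ?_)
              rw [Finset.sum_const, smul_eq_mul]
          _ ≤ ∑ Jb ∈ J.powerset, (n * thetaH n C) ^ Jb.card * (thetaL n C K₀) ^ ((J \ Jb).card) := by
              refine Finset.sum_le_sum (fun Jb hJb => ?_)
              rw [mul_comm]
              exact Nat.mul_le_mul_left _ (hPcard Jb hJb)
          _ = (n * thetaH n C + thetaL n C K₀) ^ J.card := by
              have hid : ((n * thetaH n C + thetaL n C K₀)) ^ J.card
                  = ∑ t ∈ J.powerset, (n * thetaH n C) ^ t.card * (thetaL n C K₀) ^ ((J \ t).card) := by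
                rw [← Finset.prod_const, Finset.prod_add]
                refine Finset.sum_congr rfl (fun t _ => ?_)
                rw [Finset.prod_const, Finset.prod_const]
              rw [hid]
          _ ≤ (Theta n C K₀) ^ J.card := by
              apply Nat.pow_le_pow_left
              have h9 : 2 * n * thetaH n C = n * thetaH n C + n * thetaH n C := by ring
              unfold Theta
              omega
      · -- HIGH case
        push_neg at hlow
        set A := max b ((K₀ + 1) * d) with hA
        have hApos : 0 < A := lt_of_lt_of_le (Nat.mul_pos (Nat.succ_pos K₀) hd) (le_max_right _ _)
        have hAq : ∀ q ∈ V, A ≤ q ∧ q ≤ 2 * A := by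
          intro q hq
          have h1 := (hb q hq).1
          have h2 := (hb q hq).2
          have h3 := hlow q hq
          have h4 : b ≤ A := le_max_left _ _
          have h5 : K₀ * d ≤ (K₀ + 1) * d := Nat.mul_le_mul_right d (Nat.le_succ K₀)
          have h6 : (K₀ + 1) * d ≤ A := le_max_right _ _
          constructor
          · exact max_le h1 h3
          · omega
        set D : Fin n → Set ℕ := fun i => {s : ℕ | s ∈ S i ∧ A ≤ n ^ 2 * s ∧ s ≤ 2 * A} with hD
        have hDfin : ∀ i, (D i).Finite := fun i => D_finite i
        set E : Fin n → Finset ℕ := fun i => (hDfin i).toFinset with hE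
        set B' : Finset ((_ : Fin n) × ℕ) := J.sigma (fun i => E i) with hB'
        set G : ((_ : Fin n) × ℕ) → Set (Fin n → ℕ) :=
          fun p => {y ∈ Tup S J V | y p.1 = p.2} with hG
        have hcov : Tup S J V ⊆ ⋃ p ∈ B', G p := by
          intro y hy
          obtain ⟨i₀, hi₀J, hmax⟩ := Finset.exists_max_image J y hJne
          have hqV : (∑ i, y i) ∈ V := hy.2.2
          obtain ⟨hAle, hqle⟩ := hAq _ hqV
          have hsum : ∑ i ∈ J, y i = ∑ i, y i := sum_eq_sum_support hy.2.1
          have hle : (∑ i, y i) ≤ J.card * y i₀ := by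
            have := Finset.sum_le_card_nsmul J y (y i₀) (fun x hx => hmax x hx)
            rw [hsum] at this
            simpa [smul_eq_mul] using this
          have hbig : A ≤ n ^ 2 * y i₀ := by
            have h1 : J.card ≤ n ^ 2 := le_trans hcardn (Nat.le_self_pow (by norm_num) n)
            calc A ≤ ∑ i, y i := hAle
              _ ≤ J.card * y i₀ := hle
              _ ≤ n ^ 2 * y i₀ := Nat.mul_le_mul_right _ h1
          have hyle : y i₀ ≤ 2 * A := le_trans (coord_le_sum y i₀) hqle
          have hmem : (⟨i₀, y i₀⟩ : (_ : Fin n) × ℕ) ∈ B' := by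
            rw [hB']
            refine Finset.mem_sigma.mpr ⟨hi₀J, ?_⟩
            rw [hE]
            simp only [Set.Finite.mem_toFinset]
            exact ⟨hy.1 i₀ hi₀J, hbig, hyle⟩
          exact Set.mem_biUnion hmem ⟨hy, rfl⟩
        have hfibG : ∀ p ∈ B', (G p).ncard ≤ (Theta n C K₀) ^ (J.card - 1) := by
          rintro ⟨i, s⟩ hp
          obtain ⟨hiJ, hsE⟩ := Finset.mem_sigma.mp hp
          set Vs : Set ℕ := {z | z + s ∈ V} with hVs
          have hVs_b : ∀ z ∈ Vs, (b - s) ≤ z ∧ z ≤ (b - s) + K₀ * d := by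
            intro z hz
            have h1 := (hb _ hz).1
            have h2 := (hb _ hz).2
            omega
          have hVs_dvd : ∀ z ∈ Vs, ∀ z' ∈ Vs, z ≤ z' → d ∣ z' - z := by
            intro z hz z' hz' hle
            have := hdvd _ hz _ hz' (by omega)
            have heq : (z' + s) - (z + s) = z' - z := by omega
            rwa [heq] at this
          have hmapsto : ∀ y ∈ G ⟨i, s⟩, Function.update y i 0 ∈ Tup S (J.erase i) Vs := by
            rintro y ⟨hyT, hyi⟩
            have hyi2 : y i = s := hyi
            refine ⟨?_, ?_, ?_⟩
            · intro i' hi'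
              obtain ⟨hne, hi'J⟩ := Finset.mem_erase.mp hi'
              rw [Function.update_of_ne hne]
              exact hyT.1 i' hi'J
            · intro i' hi'
              rcases eq_or_ne i' i with rfl | hne
              · simp
              · rw [Function.update_of_ne hne]
                exact hyT.2.1 i' (fun h => hi' (Finset.mem_erase.mpr ⟨hne, h⟩))
            · have hsum : ∑ x, Function.update y i 0 x = 0 + ∑ x ∈ Finset.univ.erase i, y x := by
                rw [Finset.sum_update_of_mem (Finset.mem_univ i)]
                rw [Finset.erase_eq]
              have hadd : y i + ∑ x ∈ Finset.univ.erase i, y x = ∑ x, y x :=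
                Finset.add_sum_erase Finset.univ y (Finset.mem_univ i)
              have hin : (∑ x, y x) ∈ V := hyT.2.2
              have heq : (∑ x, Function.update y i 0 x) + s = ∑ x, y x := by omega
              show (∑ x, Function.update y i 0 x) ∈ Vs
              rw [hVs]
              simp only [Set.mem_setOf_eq]
              rw [heq]
              exact hin
          have hinj : Set.InjOn (fun y => Function.update y i 0) (G ⟨i, s⟩) := by
            rintro y₁ ⟨hy₁T, hy₁i⟩ y₂ ⟨hy₂T, hy₂i⟩ heq
            funext x
            rcases eq_or_ne x i with rfl | hne
            · rw [hy₁i, hy₂i]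
            · have h5 := congrFun heq x
              simp only [Function.update_of_ne hne] at h5
              exact h5
          have hVsfin : (Tup S (J.erase i) Vs).Finite :=
            tup_finite S (B := (b - s) + K₀ * d) (fun z hz => (hVs_b z hz).2)
          have hle := Set.ncard_le_ncard_of_injOn _ hmapsto hinj hVsfin
          refine le_trans hle ?_
          have hcard1 : (J.erase i).card = J.card - 1 := Finset.card_erase_of_mem hiJ
          have := ih (J.erase i) Vs (b - s) (by omega) hVs_b hVs_dvd
          rwa [hcard1] at this
        have hGfin : ∀ p ∈ B', (G p).Finite := by
          intro p _
          exact Set.Finite.subset hVfin (fun y hy => hy.1)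
        have hstep := ncard_le_sum_cover B' G _ hcov hGfin
        have hB'card : B'.card ≤ n * thetaH n C := by
          rw [hB', Finset.card_sigma]
          have h1 : ∀ i ∈ J, (E i).card ≤ thetaH n C := by
            intro i _
            rw [hE, ← Set.ncard_eq_toFinset_card _ (hDfin i)]
            exact sparse_D_count hS hn i hApos
          calc ∑ i ∈ J, (E i).card ≤ ∑ _i ∈ J, thetaH n C := Finset.sum_le_sum h1
            _ = J.card * thetaH n C := by rw [Finset.sum_const, smul_eq_mul]
            _ ≤ n * thetaH n C := Nat.mul_le_mul_right _ hcardn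
        calc (Tup S J V).ncard ≤ ∑ p ∈ B', (G p).ncard := hstep
          _ ≤ B'.card * (Theta n C K₀) ^ (J.card - 1) := by
              refine le_trans (Finset.sum_le_sum hfibG) (le_of_eq ?_)
              rw [Finset.sum_const, smul_eq_mul]
          _ ≤ (Theta n C K₀) * (Theta n C K₀) ^ (J.card - 1) := by
              apply Nat.mul_le_mul_right
              refine le_trans hB'card ?_
              have h9 : 2 * n * thetaH n C = n * thetaH n C + n * thetaH n C := by ring
              unfold Theta
              omega
          _ = (Theta n C K₀) ^ J.card := by
              rw [← pow_succ']
              congr 1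
              omega

theorem count_ap {n C a d k : ℕ} {S : Fin n → Set ℕ} (hS : ∀ i, LogSparse C (S i))
    (hn : 0 < n) (hd : 0 < d) (hsub : AP a d k ⊆ sumSet S) :
    k ≤ (Theta n C k) ^ n := by
  classical
  set V₀ : Set ℕ := AP a d k with hV₀
  have hb : ∀ z ∈ V₀, a ≤ z ∧ z ≤ a + k * d := by
    rintro z ⟨i, hik, rfl⟩
    refine ⟨by omega, ?_⟩
    have : i * d ≤ k * d := Nat.mul_le_mul_right d (le_of_lt hik)
    omega
  have hdvd : ∀ z ∈ V₀, ∀ z' ∈ V₀, z ≤ z' → d ∣ z' - z := by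
    rintro z ⟨i, hik, rfl⟩ z' ⟨i', hik', rfl⟩ hle
    have heq : (a + i' * d) - (a + i * d) = (i' - i) * d := by
      rw [Nat.sub_mul]
      omega
    rw [heq]
    exact Dvd.intro_left _ rfl
  have hrep : ∀ j : ℕ, j < k → ∃ x : Fin n → ℕ, (∀ i, x i ∈ S i) ∧ ∑ i, x i = a + j * d := by
    intro j hj
    exact hsub ⟨j, hj, rfl⟩
  choose! φ hφ1 hφ2 using hrep
  have hmapsto : ∀ j ∈ (↑(Finset.range k) : Set ℕ), φ j ∈ Tup S Finset.univ V₀ := by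
    intro j hj
    rw [Finset.mem_coe, Finset.mem_range] at hj
    refine ⟨fun i _ => hφ1 j hj i, fun i hi => absurd (Finset.mem_univ i) hi, ?_⟩
    rw [hφ2 j hj]
    exact ⟨j, hj, rfl⟩
  have hinj : Set.InjOn φ (↑(Finset.range k) : Set ℕ) := by
    intro j₁ hj₁ j₂ hj₂ heq
    rw [Finset.mem_coe, Finset.mem_range] at hj₁ hj₂
    have h1 := hφ2 j₁ hj₁
    have h2 := hφ2 j₂ hj₂
    rw [heq] at h1
    rw [h2] at h1
    have : j₁ * d = j₂ * d := by omega
    exact Nat.eq_of_mul_eq_mul_right hd (by omega)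
  have hfin : (Tup S Finset.univ V₀).Finite :=
    tup_finite S (B := a + k * d) (fun z hz => (hb z hz).2)
  have hle := Set.ncard_le_ncard_of_injOn φ hmapsto hinj hfin
  rw [Set.ncard_coe_finset, Finset.card_range] at hle
  have hmain := main_count hS hn hd n Finset.univ V₀ a
    (le_of_eq (Finset.card_univ.trans (Fintype.card_fin n))) hb hdvd
  rw [Finset.card_univ, Fintype.card_fin] at hmain
  exact le_trans hle hmain

end Main

end Count

section Arith

open Real

lemma natlog_le_logb (x : ℕ) (hx : 1 ≤ x) : (Nat.log 2 x : ℝ) ≤ Real.logb 2 x := by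
  have h1 : (2 : ℕ) ^ Nat.log 2 x ≤ x := Nat.pow_log_le_self 2 (by omega)
  have h2 : ((2 : ℕ) ^ Nat.log 2 x : ℝ) ≤ (x : ℝ) := by exact_mod_cast h1
  have h3 : (0 : ℝ) < (2 : ℕ) ^ Nat.log 2 x := by positivity
  have h4 := (Real.logb_le_logb (by norm_num : (1:ℝ) < 2) h3 (by exact_mod_cast hx)).2 h2
  rwa [show ((2:ℕ) ^ Nat.log 2 x : ℝ) = (2:ℝ) ^ (Nat.log 2 x) by push_cast; ring,
    Real.logb_pow, Real.logb_self_eq_one (by norm_num), mul_one] at h4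

lemma logb_le_three_mul {x : ℝ} (hx : 1 ≤ x) : Real.logb 2 x ≤ 3 * x := by
  have hx0 : (0:ℝ) < x := by linarith
  have h1 : Real.log x ≤ 2 * x := by
    have hs : Real.log (Real.sqrt x) = Real.log x / 2 := Real.log_sqrt (le_of_lt hx0)
    have h2 : Real.log (Real.sqrt x) ≤ Real.sqrt x - 1 :=
      Real.log_le_sub_one_of_pos (Real.sqrt_pos.mpr hx0)
    have h3 : Real.sqrt x ≤ x := by
      nlinarith [Real.sq_sqrt (le_of_lt hx0), Real.sqrt_nonneg x]
    nlinarith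
  have hlog2 : (0.6931471803 : ℝ) < Real.log 2 := Real.log_two_gt_d9
  rw [Real.logb, div_le_iff₀ (by linarith)]
  nlinarith

lemma logb_four : Real.logb 2 4 = 2 := by
  rw [show (4:ℝ) = 2 ^ (2:ℕ) by norm_num, Real.logb_pow,
    Real.logb_self_eq_one (by norm_num)]
  norm_num

end Arith

end ApUpper

set_option maxHeartbeats 2000000

open ApUpper Real

theorem ap_in_sumset_upper_precise (C : ℕ) (hC : 2 ≤ C) :
    ∃ K : ℝ, ∀ n : ℕ, 3 ≤ n → ∀ S : Fin n → Set ℕ, (∀ i, LogSparse C (S i)) →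
      ∀ a d k : ℕ, 1 ≤ d → AP a d k ⊆ sumSet S →
        (k : ℝ) ≤ (n : ℝ) ^ ((n : ℝ) *
          (1 + Real.logb 2 (Real.logb 2 n) / Real.logb 2 n + K / Real.logb 2 n)) := by
  classical
  refine ⟨((6 * C + 30 : ℕ) : ℝ), ?_⟩
  intro n hn S hS a d k hd hsub
  set K : ℝ := ((6 * C + 30 : ℕ) : ℝ) with hK
  set l : ℝ := Real.logb 2 n with hl
  have hn0 : (0:ℝ) < n := by positivity
  have hn2 : (2:ℝ) < n := by exact_mod_cast (by omega : 2 < n)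
  have hl1 : 1 < l := by
    rw [hl]
    have := (Real.lt_logb_iff_rpow_lt (by norm_num : (1:ℝ) < 2) hn0).2
      (by rw [Real.rpow_one]; exact hn2)
    exact this
  have hl0 : (0:ℝ) < l := by linarith
  set ll : ℝ := Real.logb 2 l with hll
  have hll0 : 0 ≤ ll := Real.logb_nonneg (by norm_num) (le_of_lt hl1)
  set Kn : ℕ := 6 * C + 30 with hKn
  set W : ℝ := (2:ℝ) ^ Kn * n * l with hW
  have hW2 : (2:ℝ) ≤ W := by
    have h1 : (2:ℝ) ≤ (2:ℝ) ^ Kn := by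
      calc (2:ℝ) = 2 ^ (1:ℕ) := by norm_num
        _ ≤ 2 ^ Kn := by
            apply pow_le_pow_right₀ (by norm_num)
            omega
    have hnl : (2:ℝ) ≤ (n:ℝ) * l := by nlinarith [mul_pos (sub_pos.2 hn2) (sub_pos.2 hl1)]
    have h2 : (2:ℝ) * ((n:ℝ) * l) ≤ (2:ℝ) ^ Kn * ((n:ℝ) * l) := by nlinarith
    have h3 : W = (2:ℝ) ^ Kn * ((n:ℝ) * l) := by rw [hW]; ring
    nlinarith
  set M : ℝ := W ^ n with hM
  have hWpos : (0:ℝ) < W := by linarith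
  have hMpos : (0:ℝ) < M := by positivity
  have hM2 : (2:ℝ) ≤ M := by
    calc (2:ℝ) ≤ W := hW2
      _ = W ^ (1:ℕ) := by norm_num
      _ ≤ W ^ n := pow_le_pow_right₀ (by linarith) (by omega)
  -- Step A : the goal equals M
  have hRHS : (n : ℝ) ^ ((n : ℝ) * (1 + ll / l + K / l)) = M := by
    have hnval : (n:ℝ) = (2:ℝ) ^ l := (Real.rpow_logb (by norm_num) (by norm_num) hn0).symm
    have h2 : (2:ℝ) ^ (l * ((n : ℝ) * (1 + ll / l + K / l)))
        = (n : ℝ) ^ ((n : ℝ) * (1 + ll / l + K / l)) := by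
      rw [Real.rpow_mul (by norm_num : (0:ℝ) ≤ 2), ← hnval]
    have h3 : l * ((n : ℝ) * (1 + ll / l + K / l)) = (n:ℝ) * (l + ll + K) := by
      field_simp
    have h4 : (2:ℝ) ^ ((n:ℝ) * (l + ll + K)) = ((2:ℝ) ^ (l + ll + K)) ^ (n:ℕ) := by
      rw [mul_comm, Real.rpow_mul (by norm_num : (0:ℝ) ≤ 2), Real.rpow_natCast]
    have h5 : (2:ℝ) ^ (l + ll + K) = W := by
      rw [Real.rpow_add (by norm_num), Real.rpow_add (by norm_num)]
      rw [← hnval]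
      have h6 : (2:ℝ) ^ ll = l := by
        rw [hll]
        exact Real.rpow_logb (by norm_num) (by norm_num) hl0
      have h7 : (2:ℝ) ^ K = (2:ℝ) ^ Kn := by
        rw [hK]
        exact Real.rpow_natCast 2 Kn
      rw [h6, h7, hW]
      ring
    rw [← h2, h3, h4, h5, hM]
  rw [hRHS]
  -- Step B : contradiction argument
  by_contra hcon
  push_neg at hcon
  set k' : ℕ := Nat.floor M + 1 with hk'
  have hk'k : k' ≤ k := by
    have : Nat.floor M < k := (Nat.floor_lt (le_of_lt hMpos)).2 hcon
    omega
  have hsub' : AP a d k' ⊆ sumSet S := by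
    rintro z ⟨i, hik, rfl⟩
    exact hsub ⟨i, by omega, rfl⟩
  have hcount := count_ap hS (by omega : 0 < n) (by omega : 0 < d) hsub'
  clear_value k'
  -- bound Theta n C k' ≤ W
  have hk'M : (k' : ℝ) ≤ M + 1 := by
    rw [hk']
    push_cast
    have := Nat.floor_le (le_of_lt hMpos)
    linarith
  have hTheta : ((Theta n C k' : ℕ) : ℝ) ≤ W := by
    have hths : ((thetaH n C : ℕ) : ℝ) ≤ C * (2 + 2 * l + 1) := by
      unfold thetaH
      push_cast
      have h1 := natlog_le_logb (4 * n ^ 2) (by nlinarith)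
      have h2 : Real.logb 2 ((4 * n ^ 2 : ℕ) : ℝ) = 2 + 2 * l := by
        push_cast
        rw [Real.logb_mul (by norm_num) (by positivity)]
        rw [show ((n:ℝ)^2) = (n:ℝ)^(2:ℕ) by norm_num, Real.logb_pow, logb_four, hl]
        push_cast
        ring
      rw [h2] at h1
      have hC0 : (0:ℝ) ≤ (C:ℝ) := by positivity
      nlinarith
    have hthl : ((thetaL n C k' : ℕ) : ℝ) ≤ C * ((n:ℝ) * (K + l + ll) + 3 + 2 * l + 1) := by
      unfold thetaL
      push_cast
      have h1 := natlog_le_logb ((4 * k' + 4) * n ^ 2) (by nlinarith)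
      have h2 : Real.logb 2 (((4 * k' + 4) * n ^ 2 : ℕ) : ℝ)
          = Real.logb 2 (4 * ((k':ℝ) + 1)) + 2 * l := by
        push_cast
        rw [Real.logb_mul (by positivity) (by positivity)]
        rw [show ((n:ℝ)^2) = (n:ℝ)^(2:ℕ) by norm_num, Real.logb_pow, hl]
        have : (4 * (k':ℝ) + 4) = 4 * ((k':ℝ) + 1) := by ring
        rw [this]
        push_cast
        ring
      have h3 : Real.logb 2 (4 * ((k':ℝ) + 1)) ≤ 3 + Real.logb 2 M := by
        have hle : 4 * ((k':ℝ) + 1) ≤ 8 * M := by nlinarith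
        have h4 : Real.logb 2 (4 * ((k':ℝ) + 1)) ≤ Real.logb 2 (8 * M) :=
          (Real.logb_le_logb (by norm_num) (by positivity) (by nlinarith)).2 hle
        have h5 : Real.logb 2 (8 * M) = 3 + Real.logb 2 M := by
          rw [Real.logb_mul (by norm_num) (by positivity)]
          rw [show (8:ℝ) = 2 ^ (3:ℕ) by norm_num, Real.logb_pow,
            Real.logb_self_eq_one (by norm_num)]
          norm_num
        linarith
      have h6 : Real.logb 2 M = (n:ℝ) * (K + l + ll) := by
        rw [hM, Real.logb_pow, hW]
        rw [Real.logb_mul (by positivity) (by positivity),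
          Real.logb_mul (by positivity) (by positivity)]
        rw [show ((2:ℝ) ^ Kn) = 2 ^ (Kn:ℕ) by norm_num, Real.logb_pow,
          Real.logb_self_eq_one (by norm_num)]
        rw [← hl, ← hll, hK]
        push_cast
        ring
      rw [h2] at h1
      rw [h6] at h3
      have hC0 : (0:ℝ) ≤ (C:ℝ) := by positivity
      nlinarith
    have hsplit : ((Theta n C k' : ℕ) : ℝ)
        = ((thetaL n C k' : ℕ) : ℝ) + 2 * (n:ℝ) * ((thetaH n C : ℕ) : ℝ) := by
      unfold Theta
      push_cast
      ring
    have hll3 : ll ≤ 3 * l := by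
      rw [hll]
      exact logb_le_three_mul (le_of_lt hl1)
    have hC2 : (2:ℝ) ≤ (C:ℝ) := by exact_mod_cast hC
    have hC0 : (0:ℝ) ≤ (C:ℝ) := by linarith
    have hn3 : (3:ℝ) ≤ (n:ℝ) := by exact_mod_cast hn
    have hKval : K = 6 * (C:ℝ) + 30 := by rw [hK, hKn]; push_cast; ring
    have hCpow : (C:ℝ) ≤ (2:ℝ) ^ C := by
      have := Nat.lt_two_pow_self (n := C)
      exact_mod_cast le_of_lt this
    have hx1 : (1:ℝ) ≤ (2:ℝ) ^ C := one_le_pow₀ (by norm_num)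
    have hCK : (C:ℝ) * (K + 20) ≤ (2:ℝ) ^ Kn := by
      have e0 : ((2:ℝ) ^ Kn) = ((2:ℝ) ^ C) ^ 6 * 2 ^ 30 := by
        rw [hKn, show 6 * C + 30 = C * 6 + 30 by ring, pow_add, pow_mul]
      have e1 : (C:ℝ) * (K + 20) = 6 * (C:ℝ)^2 + 50 * (C:ℝ) := by rw [hKval]; ring
      have e2 : 6 * (C:ℝ)^2 + 50 * (C:ℝ) ≤ 56 * (C:ℝ)^2 := by nlinarith
      have e3 : (C:ℝ)^2 ≤ ((2:ℝ)^C)^2 := by nlinarith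
      have e4 : ((2:ℝ)^C)^2 ≤ ((2:ℝ)^C)^6 := pow_le_pow_right₀ hx1 (by norm_num)
      have e5 : (56:ℝ) * ((2:ℝ)^C)^6 ≤ 2^30 * ((2:ℝ)^C)^6 := by
        have : (0:ℝ) ≤ ((2:ℝ)^C)^6 := by positivity
        nlinarith
      calc (C:ℝ) * (K + 20) = 6 * (C:ℝ)^2 + 50 * (C:ℝ) := e1
        _ ≤ 56 * (C:ℝ)^2 := e2
        _ ≤ 56 * ((2:ℝ)^C)^2 := by nlinarith
        _ ≤ 56 * ((2:ℝ)^C)^6 := by nlinarith [e4]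
        _ ≤ 2^30 * ((2:ℝ)^C)^6 := e5
        _ = (2:ℝ) ^ Kn := by rw [e0]; ring
    have hmid : ((Theta n C k' : ℕ) : ℝ) ≤ (C:ℝ) * (K + 20) * ((n:ℝ) * l) := by
      rw [hsplit]
      have hK0 : (0:ℝ) ≤ K := by rw [hKval]; linarith
      have hp1 : (0:ℝ) ≤ (n:ℝ) := by positivity
      have e1 : (n:ℝ) * ll ≤ 3 * ((n:ℝ) * l) := by nlinarith
      have e2 : (2:ℝ) * l ≤ 2 * ((n:ℝ) * l) := by nlinarith
      have e3 : (4:ℝ) ≤ 4 * ((n:ℝ) * l) := by nlinarith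
      have e4 : (6:ℝ) * (n:ℝ) ≤ 6 * ((n:ℝ) * l) := by nlinarith
      have e5 : (n:ℝ) * K ≤ ((n:ℝ) * l) * K := by
        nlinarith [mul_nonneg (mul_nonneg hp1 (sub_nonneg.2 (le_of_lt hl1))) hK0]
      have f1 : ((thetaL n C k' : ℕ) : ℝ) ≤ (C:ℝ) * (((n:ℝ) * l) * K) + 10 * ((C:ℝ) * ((n:ℝ) * l)) := by
        nlinarith [hthl, mul_le_mul_of_nonneg_left e1 hC0, mul_le_mul_of_nonneg_left e2 hC0,
          mul_le_mul_of_nonneg_left e3 hC0, mul_le_mul_of_nonneg_left e5 hC0]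
      have f2 : 2 * (n:ℝ) * ((thetaH n C : ℕ) : ℝ) ≤ 10 * ((C:ℝ) * ((n:ℝ) * l)) := by
        nlinarith [mul_le_mul_of_nonneg_left hths (by positivity : (0:ℝ) ≤ 2 * (n:ℝ)),
          mul_le_mul_of_nonneg_left e4 hC0]
      calc ((thetaL n C k' : ℕ) : ℝ) + 2 * (n:ℝ) * ((thetaH n C : ℕ) : ℝ)
          ≤ (C:ℝ) * (((n:ℝ) * l) * K) + 20 * ((C:ℝ) * ((n:ℝ) * l)) := by linarith
        _ = (C:ℝ) * (K + 20) * ((n:ℝ) * l) := by ring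
    calc ((Theta n C k' : ℕ) : ℝ) ≤ (C:ℝ) * (K + 20) * ((n:ℝ) * l) := hmid
      _ ≤ (2:ℝ) ^ Kn * ((n:ℝ) * l) := by
          have hnl0 : (0:ℝ) ≤ (n:ℝ) * l := by positivity
          nlinarith [hCK]
      _ = W := by rw [hW]; ring
  have hfinal : (k':ℝ) ≤ M := by
    calc (k':ℝ) ≤ ((Theta n C k' : ℕ)^n : ℕ) := by exact_mod_cast hcount
      _ = ((Theta n C k' : ℕ):ℝ)^n := by push_cast; ring
      _ ≤ W ^ n := pow_le_pow_left₀ (by positivity) hTheta n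
      _ = M := hM.symm
  have hk'fl : k' ≤ Nat.floor M := Nat.le_floor hfinal
  omega
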